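/- Let λ > 1 and b(s) = exp(−s/(log s)^λ) for s large. Let β > 0 and define η(t) := b^{−1}(e^{−βt}) for large t. Then η(t) ∼ β t (log t)^λ as t → ∞, i.e. η(t)/(β t (log t)^λ) → 1. -/

import Mathlib

open Filter Real

theorem eta_asymptotics_almost_linear (lam β : ℝ) (hlam : 1 < lam) (hβ : 0 < β)
    (η : ℝ → ℝ)
    (hη_top : Tendsto η atTop atTop)
    (hη : ∀ᶠ t in atTop,
      Real.exp (-(η t) / (Real.log (η t)) ^ lam) = Real.exp (-β * t)) :
    Tendsto (fun t => η t / (β * t * (Real.log t) ^ lam)) atTop (nhds 1) := by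
  have hηlog : Tendsto (fun t => Real.log (η t)) atTop atTop :=
    Real.tendsto_log_atTop.comp hη_top
  have hloglog :
      Tendsto (fun t => Real.log (Real.log (η t)) / Real.log (η t)) atTop (nhds 0) :=
    (Real.isLittleO_log_id_atTop.tendsto_div_nhds_zero).comp hηlog
  have h1 : ∀ᶠ t in atTop, 1 < Real.log (η t) := hηlog.eventually_gt_atTop 1
  have h2 : ∀ᶠ t in atTop, (1:ℝ) < t := eventually_gt_atTop 1
  -- eventual equation η t = β t (log η t)^lam
  have heq : ∀ᶠ t in atTop, η t = β * t * Real.log (η t) ^ lam := by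
    filter_upwards [hη, h1, h2] with t ht hlt htt
    have hlp : 0 < Real.log (η t) := lt_trans one_pos hlt
    have hrp : 0 < Real.log (η t) ^ lam := Real.rpow_pos_of_pos hlp lam
    have h0 := Real.exp_injective ht
    field_simp at h0
    linarith [h0]
  -- log equation
  have hlogeq : ∀ᶠ t in atTop,
      Real.log t / Real.log (η t)
        = 1 - Real.log β / Real.log (η t)
            - lam * (Real.log (Real.log (η t)) / Real.log (η t)) := by
    filter_upwards [heq, h1, h2] with t ht hlt htt
    have hlp : 0 < Real.log (η t) := lt_trans one_pos hlt
    have htp : 0 < t := lt_trans one_pos htt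
    have hbt : (0:ℝ) < β * t := mul_pos hβ htp
    have hlog : Real.log (η t) = Real.log β + Real.log t + lam * Real.log (Real.log (η t)) := by
      nth_rewrite 1 [ht]
      rw [Real.log_mul (ne_of_gt hbt) (ne_of_gt (Real.rpow_pos_of_pos hlp lam)),
        Real.log_mul (ne_of_gt hβ) (ne_of_gt htp), Real.log_rpow hlp]
      try ring
    have hne : Real.log (η t) ≠ 0 := ne_of_gt hlp
    field_simp
    linarith [hlog]
  have hten : Tendsto (fun t => Real.log t / Real.log (η t)) atTop (nhds 1) := by
    rw [Filter.tendsto_congr' hlogeq]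
    have h0 : Tendsto (fun t => Real.log β / Real.log (η t)) atTop (nhds 0) :=
      tendsto_const_nhds.div_atTop hηlog
    have := ((tendsto_const_nhds (x := (1:ℝ))).sub h0).sub (hloglog.const_mul lam)
    simpa using this
  have hinv : Tendsto (fun t => Real.log (η t) / Real.log t) atTop (nhds 1) := by
    have := hten.inv₀ one_ne_zero
    simp only [inv_div, inv_one] at this
    exact this
  have hfin : Tendsto (fun t => (Real.log (η t) / Real.log t) ^ lam) atTop (nhds 1) := by
    have := hinv.rpow_const (p := lam) (Or.inl one_ne_zero)
    simpa using this
  have heq2 : ∀ᶠ t in atTop,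
      (Real.log (η t) / Real.log t) ^ lam = η t / (β * t * Real.log t ^ lam) := by
    filter_upwards [heq, h1, h2] with t ht hlt htt
    have hlp : 0 < Real.log (η t) := lt_trans one_pos hlt
    have hltp : 0 < Real.log t := Real.log_pos htt
    have htp : 0 < t := lt_trans one_pos htt
    have hr1 : Real.log t ^ lam ≠ 0 := (Real.rpow_pos_of_pos hltp lam).ne'
    have hr2 : Real.log (η t) ^ lam ≠ 0 := (Real.rpow_pos_of_pos hlp lam).ne'
    rw [Real.div_rpow hlp.le hltp.le]
    nth_rewrite 2 [ht]
    field_simp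
  exact (Filter.tendsto_congr' heq2).mp hfin
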